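/- Let F be a field extension of K generated by finitely many elements ξ_α indexed by a linearly ordered finite set A, and assume the ξ_α are algebraically independent over K. Suppose for each α, η_α = φ_α ξ_α + ψ_α where φ_α ≠ 0 and φ_α, ψ_α lie in the subfield of F generated over K by {ξ_β : β < α}. Then the family {η_α} is algebraically independent over K and generates F over K. -/

import Mathlib

open Polynomial

set_option maxHeartbeats 1000000
set_option synthInstance.maxHeartbeats 400000

section Aux

variable {K F : Type*} [Field K] [Field F] [Algebra K F]

theorem aux_isAlgebraic_adjoin_iff (S : Set F) (z : F) :
    IsAlgebraic (Algebra.adjoin K S) z ↔ IsAlgebraic (IntermediateField.adjoin K S) z := by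
  set R := Algebra.adjoin K S with hR
  set L := IntermediateField.adjoin K S with hL
  have hle : R ≤ L.toSubalgebra := IntermediateField.algebra_adjoin_le_adjoin K S
  letI : Algebra R L := RingHom.toAlgebra
    { toFun := fun r => ⟨r.1, hle r.2⟩
      map_one' := rfl
      map_mul' := fun _ _ => rfl
      map_zero' := rfl
      map_add' := fun _ _ => rfl }
  haveI : IsScalarTower R L F := IsScalarTower.of_algebraMap_eq fun _ => rfl
  have hmem : ∀ p : MvPolynomial S K, MvPolynomial.aeval (Subtype.val : S → F) p ∈ R := by
    intro p
    have h1 : Algebra.adjoin K (Set.range (Subtype.val : S → F)) =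
        (MvPolynomial.aeval (Subtype.val : S → F)).range :=
      Algebra.adjoin_range_eq_range_aeval K _
    have h2 : MvPolynomial.aeval (Subtype.val : S → F) p ∈
        (MvPolynomial.aeval (Subtype.val : S → F)).range := ⟨p, rfl⟩
    rw [← h1, Subtype.range_coe] at h2
    exact h2
  haveI : IsFractionRing R L := by
    refine { map_units := ?_, surj := ?_, exists_of_eq := ?_ }
    · rintro ⟨y, hy⟩
      rw [isUnit_iff_ne_zero]
      intro h
      have h0 : (y : F) = 0 := congrArg Subtype.val h
      exact nonZeroDivisors.ne_zero hy (Subtype.ext h0)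
    · intro z
      obtain ⟨r, s, hz⟩ := (IntermediateField.mem_adjoin_iff K (z : F)).mp z.2
      set a := MvPolynomial.aeval (Subtype.val : S → F) r with ha
      set b := MvPolynomial.aeval (Subtype.val : S → F) s with hb
      by_cases hb0 : b = 0
      · refine ⟨⟨0, 1⟩, ?_⟩
        have : (z : F) = 0 := by rw [hz, hb0, div_zero]
        apply Subtype.ext
        simp [this]
      · refine ⟨⟨⟨a, hmem r⟩, ⟨⟨b, hmem s⟩,
          mem_nonZeroDivisors_of_ne_zero (fun h => hb0 (congrArg Subtype.val h))⟩⟩, ?_⟩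
        apply Subtype.ext
        show (z : F) * b = a
        rw [hz, div_mul_cancel₀ _ hb0]
    · intro x y h
      have h0 : algebraMap R F x = algebraMap R F y := by
        rw [IsScalarTower.algebraMap_apply R L F, IsScalarTower.algebraMap_apply R L F, h]
      have : x = y := Subtype.ext h0
      exact ⟨1, by rw [this]⟩
  exact IsFractionRing.isAlgebraic_iff R L F

theorem aux_transcendental_field {A : Type*} {x : A → F} (hind : AlgebraicIndependent K x)
    (t : Set A) {i : A} (hi : i ∉ t) :
    Transcendental (IntermediateField.adjoin K (x '' t)) (x i) := by
  have h1 : AlgebraicIndependent K (fun β : t => x β) :=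
    hind.comp _ Subtype.val_injective
  have h2 : AlgebraicIndependent K (fun o : Option t => o.elim (x i) (fun β : t => x β)) := by
    have heq : (fun o : Option t => o.elim (x i) (fun β : t => x β))
        = x ∘ (fun o : Option t => o.elim i Subtype.val) := by
      funext o; cases o <;> rfl
    rw [heq]
    refine hind.comp _ ?_
    rintro (_ | a) (_ | b) h
    · rfl
    · have h' : i = ↑b := h
      exact absurd b.2 (h' ▸ hi)
    · have h' : (a : A) = i := h
      exact absurd a.2 (h'.symm ▸ hi)
    · exact congrArg some (Subtype.val_injective h)
  have h3 := (h1.option_iff_transcendental (x i)).mp h2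
  have hr : Set.range (fun β : t => x β) = x '' t := by
    rw [show (fun β : t => x β) = x ∘ (Subtype.val : t → A) from rfl, Set.range_comp,
      Subtype.range_coe]
  rw [hr] at h3
  intro halg
  exact h3 ((aux_isAlgebraic_adjoin_iff (x '' t) (x i)).mpr halg)

end Aux

/-- triangular transformation lemma: if {ξ_α} is a finite system of free
generators of F over K indexed by a linearly ordered set, and η_α = φ_α ξ_α + ψ_α with
φ_α ≠ 0, φ_α, ψ_α in the subfield generated by the ξ_β with β < α, then {η_α} is again a
system of free generators of F over K. -/
theorem stmt10 {K F : Type*} [Field K] [Field F] [Algebra K F]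
    {A : Type*} [Finite A] [LinearOrder A]
    (ξ η : A → F)
    (hind : AlgebraicIndependent K ξ)
    (hgen : IntermediateField.adjoin K (Set.range ξ) = ⊤)
    (hη : ∀ α : A, ∃ φ ψ : F,
      φ ∈ IntermediateField.adjoin K (ξ '' {β | β < α}) ∧
      ψ ∈ IntermediateField.adjoin K (ξ '' {β | β < α}) ∧
      φ ≠ 0 ∧ η α = φ * ξ α + ψ) :
    AlgebraicIndependent K η ∧ IntermediateField.adjoin K (Set.range η) = ⊤ := by
  classical
  have _inst : Fintype A := Fintype.ofFinite A
  have key : ∀ (n : ℕ) (s : Finset A), s.card = n → (∀ ⦃β γ : A⦄, γ ∈ s → β < γ → β ∈ s) →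
      AlgebraicIndependent K (fun β : (s : Set A) => η β) ∧
      IntermediateField.adjoin K (η '' (s : Set A)) =
        IntermediateField.adjoin K (ξ '' (s : Set A)) := by
    intro n
    induction n with
    | zero =>
      intro s hs _
      have hse : s = ∅ := Finset.card_eq_zero.mp hs
      subst hse
      haveI : IsEmpty ((↑(∅ : Finset A)) : Set A) := ⟨fun x => by simpa using x.2⟩
      exact ⟨algebraicIndependent_empty_type, by simp⟩
    | succ n ih =>
      intro s hcard hdc
      have hne : s.Nonempty := by
        rw [← Finset.card_pos, hcard]; omega
      set α := s.max' hne with hα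
      set s' := s.erase α with hs'
      have hαs : α ∈ s := s.max'_mem hne
      have hcard' : s'.card = n := by
        rw [hs', Finset.card_erase_of_mem hαs, hcard]
        omega
      have hdc' : ∀ ⦃β γ : A⦄, γ ∈ s' → β < γ → β ∈ s' := by
        intro β γ hγ hβγ
        rw [Finset.mem_erase] at hγ ⊢
        have hγα : γ ≤ α := s.le_max' γ hγ.2
        exact ⟨ne_of_lt (lt_of_lt_of_le hβγ hγα), hdc hγ.2 hβγ⟩
      have hαs' : α ∉ (s' : Set A) := by simp [hs']
      have hset : (s' : Set A) = {β | β < α} := by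
        ext β
        simp only [hs', Finset.coe_erase, Set.mem_diff, Finset.mem_coe, Set.mem_singleton_iff,
          Set.mem_setOf_eq]
        constructor
        · rintro ⟨hβ, hβα⟩
          exact lt_of_le_of_ne (s.le_max' β hβ) hβα
        · intro hβ
          exact ⟨hdc hαs hβ, ne_of_lt hβ⟩
      obtain ⟨hind', heq'⟩ := ih s' hcard' hdc'
      obtain ⟨φ, ψ, hφ, hψ, hφ0, hrel⟩ := hη α
      rw [← hset] at hφ hψ
      set L' := IntermediateField.adjoin K (ξ '' (s' : Set A)) with hL'
      -- transcendence of ξ α over L'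
      have htξ : Transcendental L' (ξ α) := aux_transcendental_field hind (s' : Set A) hαs'
      -- transcendence of η α over L'
      have htη : Transcendental L' (η α) := by
        have hφ0' : (⟨φ, hφ⟩ : L') ≠ 0 := fun h => hφ0 (congrArg Subtype.val h)
        have hpoly : η α = Polynomial.aeval (ξ α)
            (Polynomial.C (⟨φ, hφ⟩ : L') * Polynomial.X + Polynomial.C (⟨ψ, hψ⟩ : L')) := by
          rw [hrel]
          simp [Algebra.smul_def]
        rw [hpoly]
        refine htξ.aeval _ ?_ ?_
        · rw [Polynomial.natDegree_linear hφ0']; omega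
        · rw [Polynomial.leadingCoeff_linear hφ0']
          exact mem_nonZeroDivisors_of_ne_zero hφ0'
      have hsins : (s : Set A) = insert α (s' : Set A) := by
        rw [hs', ← Finset.coe_insert, Finset.insert_erase hαs]
      -- independence
      have hindOpt : AlgebraicIndependent K
          (fun o : Option ((s' : Set A)) => o.elim (η α) (fun β : (s' : Set A) => η β)) := by
        refine (hind'.option_iff_transcendental (η α)).mpr ?_
        have hr : Set.range (fun β : (s' : Set A) => η β) = η '' (s' : Set A) :=
          (Set.image_eq_range η ((s' : Finset A) : Set A)).symm
        rw [hr]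
        intro halg
        apply htη
        have := (aux_isAlgebraic_adjoin_iff (η '' (s' : Set A)) (η α)).mp halg
        rwa [heq'] at this
      have hindS : AlgebraicIndependent K (fun β : (s : Set A) => η β) := by
        rw [hsins]
        have hfun : (fun o : Option ((s' : Set A)) => o.elim (η α) (fun β : (s' : Set A) => η β))
            ∘ (Set.subtypeInsertEquivOption hαs') = fun β : ↥(insert α (s' : Set A)) => η ↑β := by
          funext x
          by_cases h : ↑x = α <;> simp [h, Set.subtypeInsertEquivOption]
        exact (algebraicIndependent_equiv' (Set.subtypeInsertEquivOption hαs') hfun).mpr hindOpt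
      -- generation
      have hξα : ξ α = (η α - ψ) * φ⁻¹ := by
        rw [hrel]; field_simp; ring
      have hgenS : IntermediateField.adjoin K (η '' (s : Set A)) =
          IntermediateField.adjoin K (ξ '' (s : Set A)) := by
        rw [hsins, Set.image_insert_eq, Set.image_insert_eq]
        apply le_antisymm
        · rw [IntermediateField.adjoin_le_iff]
          intro z hz
          rcases Set.mem_insert_iff.mp hz with rfl | hz
          · rw [hrel]
            have h1 : ξ α ∈ IntermediateField.adjoin K (insert (ξ α) (ξ '' (s' : Set A))) :=
              IntermediateField.subset_adjoin K _ (Set.mem_insert _ _)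
            have hmono : L' ≤ IntermediateField.adjoin K (insert (ξ α) (ξ '' (s' : Set A))) :=
              IntermediateField.adjoin.mono K _ _ (Set.subset_insert _ _)
            exact add_mem (mul_mem (hmono hφ) h1) (hmono hψ)
          · have h1 := IntermediateField.subset_adjoin K (η '' (s' : Set A)) hz
            rw [heq'] at h1
            exact IntermediateField.adjoin.mono K _ _ (Set.subset_insert _ _) h1
        · rw [IntermediateField.adjoin_le_iff]
          intro z hz
          have hmono : L' ≤ IntermediateField.adjoin K (insert (η α) (η '' (s' : Set A))) := by
            have h0 : IntermediateField.adjoin K (η '' (s' : Set A)) ≤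
                IntermediateField.adjoin K (insert (η α) (η '' (s' : Set A))) :=
              IntermediateField.adjoin.mono K _ _ (Set.subset_insert _ _)
            rw [heq'] at h0
            exact h0
          rcases Set.mem_insert_iff.mp hz with rfl | hz
          · rw [hξα]
            have h1 : η α ∈ IntermediateField.adjoin K (insert (η α) (η '' (s' : Set A))) :=
              IntermediateField.subset_adjoin K _ (Set.mem_insert _ _)
            exact mul_mem (sub_mem h1 (hmono hψ)) (inv_mem (hmono hφ))
          · exact hmono (IntermediateField.subset_adjoin K _ hz)
      exact ⟨hindS, hgenS⟩
  obtain ⟨hi, hg⟩ := key Finset.univ.card Finset.univ rfl (fun β γ _ _ => Finset.mem_univ β)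
  have huniv : ((Finset.univ : Finset A) : Set A) = Set.univ := Finset.coe_univ
  constructor
  · let e : A ≃ ((Finset.univ : Finset A) : Set A) :=
      (Equiv.Set.univ A).symm.trans (Equiv.setCongr huniv.symm)
    have hfun : (fun β : ((Finset.univ : Finset A) : Set A) => η ↑β) ∘ e = η := rfl
    exact (algebraicIndependent_equiv' e hfun).mpr hi
  · rw [huniv, Set.image_univ, Set.image_univ] at hg
    rw [hg, hgen]
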